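/- Let V be a finite-dimensional real inner product space, T : V → V a self-adjoint linear endomorphism, and k a natural number. Then T has at least k negative eigenvalues (counted with multiplicity) if and only if there exists a k-dimensional subspace W ⊆ V such that ⟨T v, v⟩ < 0 for every nonzero v ∈ W. -/

import Mathlib

open FiniteDimensional Module

/-- A self-adjoint endomorphism of a finite-dimensional real inner product space has at
least `k` negative eigenvalues (counted with multiplicity) if and only if there is a
`k`-dimensional subspace on which the associated quadratic form is negative definite. -/
theorem negative_eigenvalues_iff_negative_subspace
    {V : Type*} [NormedAddCommGroup V] [InnerProductSpace ℝ V] [FiniteDimensional ℝ V]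
    (T : V →ₗ[ℝ] V) (hT : ∀ u v : V, inner ℝ (T u) v = (inner ℝ u (T v) : ℝ)) (k : ℕ) :
    (∃ μs : Finset ℝ, (∀ μ ∈ μs, μ < 0) ∧
        k ≤ ∑ μ ∈ μs, finrank ℝ (Module.End.eigenspace T μ)) ↔
    (∃ W : Submodule ℝ V, finrank ℝ W = k ∧
        ∀ v ∈ W, v ≠ 0 → (inner ℝ (T v) v : ℝ) < 0) := by
  classical
  have hT' : T.IsSymmetric := hT
  set n := finrank ℝ V with hn
  have hn' : finrank ℝ V = n := rfl
  set b := hT'.eigenvectorBasis hn' with hb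
  set μ := hT'.eigenvalues hn' with hμ
  have hrepr : ∀ (v : V) (i : Fin n), b.repr (T v) i = μ i * b.repr v i := fun v i =>
    hT'.eigenvectorBasis_apply_self_apply hn' v i
  -- the quadratic form in coordinates
  have hform : ∀ v : V, (inner ℝ (T v) v : ℝ) = ∑ i, μ i * (b.repr v i) ^ 2 := by
    intro v
    have : (inner ℝ (T v) v : ℝ) = inner ℝ (b.repr (T v)) (b.repr v) :=
      (b.repr.inner_map_map (T v) v).symm
    rw [this]
    rw [PiLp.inner_apply]
    refine Finset.sum_congr rfl fun i _ => ?_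
    simp [hrepr v i, RCLike.inner_apply, mul_comm, sq]
    ring
  -- membership in spans of sub-families of the basis
  have hmem : ∀ (s : Set (Fin n)) (v : V),
      v ∈ Submodule.span ℝ (b '' s) ↔ ∀ i ∉ s, b.repr v i = 0 := by
    intro s v
    rw [show (b '' s) = (⇑b.toBasis '' s) by rw [b.coe_toBasis]]
    rw [Basis.mem_span_image]
    constructor
    · intro h i hi
      rw [← b.coe_toBasis_repr_apply]
      by_contra h0
      exact hi (h (Finsupp.mem_support_iff.2 h0))
    · intro h i hi
      by_contra h0
      have := h i h0
      rw [← b.coe_toBasis_repr_apply] at this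
      exact Finsupp.mem_support_iff.1 hi this
  -- dimension of spans of sub-families
  have hdim : ∀ s : Finset (Fin n), finrank ℝ (Submodule.span ℝ (b '' ↑s)) = s.card := by
    intro s
    have hrange : Set.range (fun i : s => b i) = b '' ↑s := by
      ext x; simp
    have hli : LinearIndependent ℝ (fun i : s => b i) :=
      b.orthonormal.linearIndependent.comp _ Subtype.coe_injective
    rw [← hrange, finrank_span_eq_card hli, Fintype.card_coe]
  -- eigenspaces are spans of sub-families
  have heig : ∀ ν : ℝ, Module.End.eigenspace T ν
      = Submodule.span ℝ (b '' {i | μ i = ν}) := by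
    intro ν
    ext v
    rw [Module.End.mem_eigenspace_iff, hmem]
    constructor
    · intro h i hi
      have h1 : b.repr (T v) i = b.repr (ν • v) i := by rw [h]
      rw [hrepr, map_smul] at h1
      have h2 : μ i * b.repr v i = ν * b.repr v i := by
        simpa using h1
      by_contra h0
      exact hi (mul_right_cancel₀ h0 h2)
    · intro h
      apply b.repr.injective
      ext i
      rw [hrepr, map_smul]
      by_cases hi : μ i = ν
      · simp [hi]
      · simp [h i hi]
  set S : Finset (Fin n) := Finset.univ.filter (fun i => μ i < 0) with hS
  constructor
  · rintro ⟨μs, hneg, hk⟩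
    -- total multiplicity is at most the number of negative basis eigenvalues
    have hfib : ∀ ν ∈ μs, finrank ℝ (Module.End.eigenspace T ν)
        = ((Finset.univ.filter (fun i => μ i ∈ μs)).filter (fun i => μ i = ν)).card := by
      intro ν hν
      rw [heig ν]
      have : {i | μ i = ν} =
          ↑((Finset.univ.filter (fun i => μ i ∈ μs)).filter (fun i => μ i = ν)) := by
        ext i
        simp only [Finset.coe_filter, Set.mem_setOf_eq, Finset.mem_univ, true_and,
          Finset.mem_filter]
        constructor
        · intro h; exact ⟨h ▸ hν, h⟩
        · intro h; exact h.2
      rw [this, hdim]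
    have hsum : ∑ ν ∈ μs, finrank ℝ (Module.End.eigenspace T ν)
        = (Finset.univ.filter (fun i => μ i ∈ μs)).card := by
      rw [Finset.card_eq_sum_card_fiberwise
        (f := μ) (s := Finset.univ.filter (fun i => μ i ∈ μs)) (t := μs) (fun i hi => (Finset.mem_filter.1 hi).2)]
      exact Finset.sum_congr rfl hfib
    have hsub : (Finset.univ.filter (fun i => μ i ∈ μs)) ⊆ S := by
      intro i hi
      rw [hS, Finset.mem_filter]
      exact ⟨Finset.mem_univ i, hneg _ ((Finset.mem_filter.1 hi).2)⟩
    have hkS : k ≤ S.card := le_trans hk (hsum ▸ Finset.card_le_card hsub)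
    obtain ⟨S', hS'S, hS'card⟩ := Finset.exists_subset_card_eq hkS
    refine ⟨Submodule.span ℝ (b '' ↑S'), by rw [hdim, hS'card], ?_⟩
    intro v hv hv0
    have hcoef : ∀ i ∉ S', b.repr v i = 0 := (hmem _ v).1 hv
    rw [hform]
    have hnz : ∃ i ∈ (Finset.univ : Finset (Fin n)),
        μ i * (b.repr v i) ^ 2 < 0 := by
      have : b.repr v ≠ 0 := fun h => hv0 (by simpa using b.repr.injective (by simpa using h))
      have : ∃ i, b.repr v i ≠ 0 := by
        by_contra h
        push_neg at h
        exact this (by ext i; exact h i)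
      obtain ⟨i, hi⟩ := this
      have hiS' : i ∈ S' := by
        by_contra h
        exact hi (hcoef i h)
      have hμi : μ i < 0 := by
        have := hS'S hiS'
        simpa [hS] using this
      exact ⟨i, Finset.mem_univ i,
        mul_neg_of_neg_of_pos hμi (by positivity)⟩
    have hle : ∀ i ∈ (Finset.univ : Finset (Fin n)),
        μ i * (b.repr v i) ^ 2 ≤ 0 := by
      intro i _
      by_cases hi : i ∈ S'
      · have hμi : μ i < 0 := by
          have := hS'S hi
          simpa [hS] using this
        exact mul_nonpos_of_nonpos_of_nonneg hμi.le (sq_nonneg _)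
      · simp [hcoef i hi]
    calc ∑ i, μ i * (b.repr v i) ^ 2 < ∑ _i : Fin n, (0 : ℝ) := by
          obtain ⟨i, hi, hlt⟩ := hnz
          exact Finset.sum_lt_sum hle ⟨i, hi, hlt⟩
      _ = 0 := by simp
  · rintro ⟨W, hWk, hWneg⟩
    refine ⟨S.image μ, ?_, ?_⟩
    · intro ν hν
      obtain ⟨i, hi, rfl⟩ := Finset.mem_image.1 hν
      simpa [hS] using hi
    -- the sum of multiplicities over negative eigenvalues is `S.card`
    have hsum : ∑ ν ∈ S.image μ, finrank ℝ (Module.End.eigenspace T ν) = S.card := by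
      rw [Finset.card_eq_sum_card_fiberwise
        (f := μ) (t := S.image μ) (fun i hi => Finset.mem_image_of_mem μ hi)]
      refine Finset.sum_congr rfl fun ν hν => ?_
      obtain ⟨j, hj, rfl⟩ := Finset.mem_image.1 hν
      rw [heig]
      have : {i | μ i = μ j} = ↑(S.filter (fun i => μ i = μ j)) := by
        ext i
        simp only [Set.mem_setOf_eq, Finset.coe_filter, Finset.mem_filter, hS,
          Finset.mem_univ, true_and]
        constructor
        · intro h
          refine ⟨?_, h⟩
          rw [h]
          simpa [hS] using hj
        · exact fun h => h.2
      rw [this, hdim]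
    rw [hsum]
    -- `W` is disjoint from the span of the nonnegative part of the basis
    set P : Submodule ℝ V := Submodule.span ℝ (b '' ↑(Sᶜ)) with hP
    have hPpos : ∀ v ∈ P, (0 : ℝ) ≤ inner ℝ (T v) v := by
      intro v hv
      have hcoef : ∀ i ∉ Sᶜ, b.repr v i = 0 := (hmem _ v).1 hv
      rw [hform]
      apply Finset.sum_nonneg
      intro i _
      by_cases hi : i ∈ Sᶜ
      · have : ¬ μ i < 0 := by simpa [hS] using Finset.mem_compl.1 hi
        exact mul_nonneg (not_lt.1 this) (sq_nonneg _)
      · simp [hcoef i hi]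
    have hdisj : W ⊓ P = ⊥ := by
      rw [Submodule.eq_bot_iff]
      rintro v ⟨hvW, hvP⟩
      by_contra h0
      exact absurd (hPpos v hvP) (not_le.2 (hWneg v hvW h0))
    have hrank := Submodule.finrank_sup_add_finrank_inf_eq W P
    rw [hdisj, finrank_bot, hWk] at hrank
    have hPdim : finrank ℝ P = n - S.card := by
      rw [hP, hdim, Finset.card_compl, Fintype.card_fin]
    have hsup : finrank ℝ ↥(W ⊔ P) ≤ n := Submodule.finrank_le _
    have hScard : S.card ≤ n := le_trans (Finset.card_le_univ S) (by simp)
    omega
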